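/- There is a unique way to assign to each matroid M a polynomial P_M(t) with integer coefficients such that: (1) if rk M = 0 then P_M(t) = 1; (2) if rk M > 0 then deg P_M(t) < (rk M)/2; (3) for every M, t^{rk M} P_M(1/t) = \sum_F \chi_{M_F}(t) P_{M^F}(t), where the sum is over all flats F of M. -/

import Mathlib

open Polynomial Finset

/-- A "pre-matroid": a finite ground set together with a rank function.
It is a matroid when `IsMatroid` holds. -/
structure PreMatroid (α : Type*) where
  E : Finset α
  r : Finset α → ℕ

namespace PreMatroid

variable {α : Type*} [DecidableEq α]

/-- The rank axioms for a rank function on the ground set `E`, extended to all finite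
sets by `r A = r (A ∩ E)`. -/
def IsMatroid (M : PreMatroid α) : Prop :=
  M.r ∅ = 0 ∧ (∀ A, M.r A ≤ A.card) ∧ (∀ A B, A ⊆ B → M.r A ≤ M.r B) ∧
    (∀ A B, M.r (A ∪ B) + M.r (A ∩ B) ≤ M.r A + M.r B) ∧ (∀ A, M.r (A ∩ M.E) = M.r A)

/-- The rank of a matroid. -/
def rk (M : PreMatroid α) : ℕ := M.r M.E

/-- The flats of a matroid: subsets of the ground set such that adding any new element of the
ground set increases the rank. -/
def flats (M : PreMatroid α) : Finset (Finset α) :=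
  M.E.powerset.filter fun F => ∀ e ∈ M.E, e ∉ F → M.r F < M.r (insert e F)

theorem subset_of_mem_flats {M : PreMatroid α} {F : Finset α} (hF : F ∈ M.flats) : F ⊆ M.E :=
  mem_powerset.mp (mem_filter.mp hF).1

/-- The Möbius function `μ(∅̂, F)` of the lattice of flats, where `∅̂` is the minimal flat:
`μ = 1` on the minimal flat, and on any other flat `F` it is minus the sum of the values of `μ`
on all flats strictly contained in `F`. -/
def mu (M : PreMatroid α) (F : Finset α) : ℤ :=
  if (M.flats.filter fun G => G ⊂ F).Nonempty then
    -∑ G ∈ (M.flats.filter fun G => G ⊂ F).attach, M.mu G.1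
  else 1
termination_by F.card
decreasing_by exact Finset.card_lt_card (Finset.mem_filter.mp G.2).2

/-- The characteristic polynomial `χ_M(t) = ∑_{F ∈ L(M)} μ(∅̂,F) t^{rk M - rk F}`. -/
noncomputable def charPoly (M : PreMatroid α) : Polynomial ℤ :=
  ∑ F ∈ M.flats, Polynomial.C (M.mu F) * Polynomial.X ^ (M.rk - M.r F)

/-- The localization `M_F`: the restriction of `M` to the flat `F`. -/
def loc (M : PreMatroid α) (F : Finset α) : PreMatroid α :=
  ⟨F, fun A => M.r (A ∩ F)⟩

/-- The contraction (restriction) `M^F` of `M` at the flat `F`, with ground set `E ∖ F` and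
rank function `A ↦ r (A ∪ F) - r F`. -/
def con (M : PreMatroid α) (F : Finset α) : PreMatroid α :=
  ⟨M.E \ F, fun A => M.r ((A ∩ (M.E \ F)) ∪ F) - M.r F⟩

theorem IsMatroid.con {M : PreMatroid α} (h : M.IsMatroid) {F : Finset α} (hF : F ⊆ M.E) :
    (M.con F).IsMatroid := by
  obtain ⟨h0, hle, hmono, hsub, hcomp⟩ := h
  refine ⟨?_, ?_, ?_, ?_, ?_⟩
  · show M.r ((∅ ∩ (M.E \ F)) ∪ F) - M.r F = 0
    simp
  · intro A
    show M.r ((A ∩ (M.E \ F)) ∪ F) - M.r F ≤ A.card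
    have h1 := hsub (A ∩ (M.E \ F)) F
    have h2 := hle (A ∩ (M.E \ F))
    have h3 : (A ∩ (M.E \ F)).card ≤ A.card := card_le_card inter_subset_left
    omega
  · intro A B hAB
    show M.r ((A ∩ (M.E \ F)) ∪ F) - M.r F ≤ M.r ((B ∩ (M.E \ F)) ∪ F) - M.r F
    have : (A ∩ (M.E \ F)) ∪ F ⊆ (B ∩ (M.E \ F)) ∪ F :=
      union_subset_union (inter_subset_inter hAB (Finset.Subset.refl _)) (Finset.Subset.refl _)
    exact Nat.sub_le_sub_right (hmono _ _ this) _
  · intro A B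
    set D := M.E \ F with hD
    show M.r (((A ∪ B) ∩ D) ∪ F) - M.r F + (M.r (((A ∩ B) ∩ D) ∪ F) - M.r F) ≤
      M.r ((A ∩ D) ∪ F) - M.r F + (M.r ((B ∩ D) ∪ F) - M.r F)
    have e1 : (A ∪ B) ∩ D ∪ F = ((A ∩ D) ∪ F) ∪ ((B ∩ D) ∪ F) := by
      ext x; simp; tauto
    have e2 : (A ∩ B) ∩ D ∪ F = ((A ∩ D) ∪ F) ∩ ((B ∩ D) ∪ F) := by
      ext x; simp; tauto
    have key := hsub ((A ∩ D) ∪ F) ((B ∩ D) ∪ F)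
    have m1 := hmono F ((A ∩ D) ∪ F) subset_union_right
    have m2 := hmono F ((B ∩ D) ∪ F) subset_union_right
    have m3 := hmono F ((A ∪ B) ∩ D ∪ F) subset_union_right
    have m4 := hmono F ((A ∩ B) ∩ D ∪ F) subset_union_right
    rw [← e1, ← e2] at key
    omega
  · intro A
    show M.r ((A ∩ (M.E \ F) ∩ (M.E \ F)) ∪ F) - M.r F = M.r ((A ∩ (M.E \ F)) ∪ F) - M.r F
    rw [inter_assoc, inter_self]

end PreMatroid

/-- The type of assignments, to each matroid (on any ground type), of a polynomial. -/
def KLfun : Type 1 := ∀ (α : Type) [DecidableEq α] (M : PreMatroid α), M.IsMatroid → Polynomial ℤ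

/-- The defining conditions of the Kazhdan-Lusztig polynomial of a matroid:
`P_M = 1` in rank zero, `deg P_M < (rk M)/2` in positive rank, and the defining recursion
`t^{rk M} P_M(1/t) = ∑_{F ∈ L(M)} χ_{M_F}(t) P_{M^F}(t)`. -/
def KLconds (P : KLfun) : Prop :=
  ∀ (α : Type) [DecidableEq α] (M : PreMatroid α) (h : M.IsMatroid),
    (M.rk = 0 → P α M h = 1) ∧
    (0 < M.rk → 2 * (P α M h).natDegree < M.rk) ∧
    ((P α M h).reflect M.rk =
      ∑ F ∈ M.flats.attach, (M.loc F.1).charPoly *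
        P α (M.con F.1) (h.con (PreMatroid.subset_of_mem_flats F.2)))

section Chunk1
namespace PreMatroid
variable {α : Type*} [DecidableEq α] {M : PreMatroid α}

theorem r_empty (hM : M.IsMatroid) : M.r ∅ = 0 := hM.1
theorem r_le_card (hM : M.IsMatroid) (A : Finset α) : M.r A ≤ A.card := hM.2.1 A
theorem r_mono (hM : M.IsMatroid) {A B : Finset α} (h : A ⊆ B) : M.r A ≤ M.r B := hM.2.2.1 A B h
theorem r_submod (hM : M.IsMatroid) (A B : Finset α) :
    M.r (A ∪ B) + M.r (A ∩ B) ≤ M.r A + M.r B := hM.2.2.2.1 A B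
theorem r_inter_ground (hM : M.IsMatroid) (A : Finset α) : M.r (A ∩ M.E) = M.r A := hM.2.2.2.2 A

theorem r_le_rk (hM : M.IsMatroid) {A : Finset α} (h : A ⊆ M.E) : M.r A ≤ M.rk :=
  r_mono hM h

theorem mem_flats_iff {F : Finset α} :
    F ∈ M.flats ↔ F ⊆ M.E ∧ ∀ e ∈ M.E, e ∉ F → M.r F < M.r (insert e F) := by
  simp [flats, Finset.mem_filter, Finset.mem_powerset]

theorem ground_mem_flats : M.E ∈ M.flats := by
  rw [mem_flats_iff]
  exact ⟨Finset.Subset.refl _, fun e he hne => absurd he hne⟩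

theorem r_insert_le (hM : M.IsMatroid) (A : Finset α) (e : α) :
    M.r (insert e A) ≤ M.r A + M.r {e} := by
  have h := r_submod hM A {e}
  have : A ∪ {e} = insert e A := by ext x; simp [or_comm]
  rw [this] at h
  omega

/-- The set of loops. -/
def loops (M : PreMatroid α) : Finset α := M.E.filter fun e => M.r {e} = 0

theorem r_eq_zero_of_loops (hM : M.IsMatroid) {A : Finset α} (h : ∀ e ∈ A, M.r {e} = 0) :
    M.r A = 0 := by
  classical
  revert h
  induction A using Finset.induction_on with
  | empty => exact fun _ => r_empty hM
  | @insert a s ha ih =>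
    intro hins
    have h1 := r_insert_le hM s a
    have h2 : M.r {a} = 0 := hins a (Finset.mem_insert_self a s)
    have h3 : M.r s = 0 := ih fun e he => hins e (Finset.mem_insert_of_mem he)
    omega

theorem r_loops (hM : M.IsMatroid) : M.r M.loops = 0 :=
  r_eq_zero_of_loops hM fun e he => (Finset.mem_filter.mp he).2

theorem loops_subset_flat (hM : M.IsMatroid) {F : Finset α} (hF : F ∈ M.flats) :
    M.loops ⊆ F := by
  intro e he
  obtain ⟨heE, her⟩ := Finset.mem_filter.mp he
  by_contra hne
  have h1 := (mem_flats_iff.mp hF).2 e heE hne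
  have h2 := r_insert_le hM F e
  omega

theorem one_le_r_singleton (hM : M.IsMatroid) {e : α} (he : e ∈ M.E) (hne : e ∉ M.loops) :
    1 ≤ M.r {e} := by
  have : ¬ M.r {e} = 0 := fun h => hne (Finset.mem_filter.mpr ⟨he, h⟩)
  omega

theorem loops_mem_flats (hM : M.IsMatroid) : M.loops ∈ M.flats := by
  rw [mem_flats_iff]
  refine ⟨Finset.filter_subset _ _, fun e he hne => ?_⟩
  have h1 : 1 ≤ M.r {e} := one_le_r_singleton hM he hne
  have h2 : M.r {e} ≤ M.r (insert e M.loops) :=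
    r_mono hM (Finset.singleton_subset_iff.mpr (Finset.mem_insert_self _ _))
  have h3 := r_loops hM
  omega

theorem empty_mem_flats_iff (hM : M.IsMatroid) : ∅ ∈ M.flats ↔ M.loops = ∅ := by
  constructor
  · intro h
    rw [Finset.eq_empty_iff_forall_notMem]
    intro e he
    obtain ⟨heE, her⟩ := Finset.mem_filter.mp he
    have := (mem_flats_iff.mp h).2 e heE (Finset.notMem_empty e)
    rw [r_empty hM] at this
    have : M.r {e} ≠ 0 := by
      have h2 : M.r (insert e ∅) = M.r {e} := by simp
      omega
    exact this her
  · intro h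
    rw [mem_flats_iff]
    refine ⟨Finset.empty_subset _, fun e he _ => ?_⟩
    have h1 : e ∉ M.loops := by rw [h]; exact Finset.notMem_empty e
    have h2 := one_le_r_singleton hM he h1
    have h3 : insert e (∅ : Finset α) = {e} := by simp
    rw [r_empty hM, h3]
    omega

theorem rank_lt_of_flat_ssubset (hM : M.IsMatroid) {F G : Finset α} (hF : F ∈ M.flats)
    (hG : G ⊆ M.E) (hFG : F ⊂ G) : M.r F < M.r G := by
  obtain ⟨e, heG, heF⟩ := Finset.exists_of_ssubset hFG
  have hsub := hFG.1
  have h1 := (mem_flats_iff.mp hF).2 e (hG heG) heF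
  have h2 : M.r (insert e F) ≤ M.r G := r_mono hM (Finset.insert_subset heG hsub)
  omega

theorem r_flat_lt_rk (hM : M.IsMatroid) {F : Finset α} (hF : F ∈ M.flats) (hne : F ≠ M.E) :
    M.r F < M.rk :=
  rank_lt_of_flat_ssubset hM hF (Finset.Subset.refl _)
    (Finset.ssubset_iff_subset_ne.mpr ⟨subset_of_mem_flats hF, hne⟩)

end PreMatroid
end Chunk1
section Chunk2
namespace PreMatroid
variable {α : Type*} [DecidableEq α] {M : PreMatroid α}

theorem loc_E (F : Finset α) : (M.loc F).E = F := rfl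
theorem loc_r (F A : Finset α) : (M.loc F).r A = M.r (A ∩ F) := rfl
theorem con_E (F : Finset α) : (M.con F).E = M.E \ F := rfl
theorem con_r (F A : Finset α) : (M.con F).r A = M.r ((A ∩ (M.E \ F)) ∪ F) - M.r F := rfl

theorem loc_r_of_subset {F A : Finset α} (h : A ⊆ F) : (M.loc F).r A = M.r A := by
  rw [loc_r, Finset.inter_eq_left.mpr h]

theorem rk_loc (F : Finset α) : (M.loc F).rk = M.r F := by
  rw [rk, loc_E, loc_r_of_subset (Finset.Subset.refl F)]

theorem IsMatroid.loc (hM : M.IsMatroid) (F : Finset α) : (M.loc F).IsMatroid := by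
  obtain ⟨h0, hle, hmono, hsub, hcomp⟩ := hM
  refine ⟨?_, ?_, ?_, ?_, ?_⟩
  · show M.r (∅ ∩ F) = 0; simpa using h0
  · intro A
    show M.r (A ∩ F) ≤ A.card
    exact le_trans (hle _) (Finset.card_le_card Finset.inter_subset_left)
  · intro A B hAB
    exact hmono _ _ (Finset.inter_subset_inter hAB (Finset.Subset.refl _))
  · intro A B
    show M.r ((A ∪ B) ∩ F) + M.r ((A ∩ B) ∩ F) ≤ _
    have e1 : (A ∪ B) ∩ F = (A ∩ F) ∪ (B ∩ F) := by ext x; simp only [Finset.mem_union, Finset.mem_inter, Finset.mem_insert]; tauto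
    have e2 : (A ∩ B) ∩ F = (A ∩ F) ∩ (B ∩ F) := by ext x; simp only [Finset.mem_union, Finset.mem_inter, Finset.mem_insert]; tauto
    rw [e1, e2]; exact hsub _ _
  · intro A
    show M.r ((A ∩ F) ∩ F) = M.r (A ∩ F)
    rw [Finset.inter_assoc, Finset.inter_self]

theorem con_r_of_subset (hM : M.IsMatroid) {F A : Finset α} (hA : A ⊆ M.E \ F) :
    (M.con F).r A = M.r (A ∪ F) - M.r F := by
  rw [con_r, Finset.inter_eq_left.mpr hA]

theorem con_empty (hM : M.IsMatroid) : M.con ∅ = M := by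
  obtain ⟨E, r⟩ := M
  obtain ⟨h0, hle, hmono, hsub, hcomp⟩ := hM
  simp only [con, Finset.sdiff_empty, mk.injEq, true_and]
  funext A
  simp only [Finset.union_empty]
  show r (A ∩ E) - r ∅ = r A
  rw [show r ∅ = 0 from h0, Nat.sub_zero]
  exact hcomp A

theorem rk_con (hM : M.IsMatroid) {F : Finset α} (hF : F ⊆ M.E) :
    (M.con F).rk = M.rk - M.r F := by
  rw [rk, con_E, con_r_of_subset hM (Finset.Subset.refl _), Finset.sdiff_union_of_subset hF, rk]

theorem mem_flats_con_iff (hM : M.IsMatroid) {F : Finset α} (hF : F ∈ M.flats) {Y : Finset α} :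
    Y ∈ (M.con F).flats ↔ Y ⊆ M.E \ F ∧ Y ∪ F ∈ M.flats := by
  have hFE : F ⊆ M.E := subset_of_mem_flats hF
  constructor
  · rintro hYf
    obtain ⟨hY, hcond⟩ := mem_flats_iff.mp hYf
    rw [con_E] at hY
    refine ⟨hY, mem_flats_iff.mpr ⟨Finset.union_subset (hY.trans (Finset.sdiff_subset)) hFE, ?_⟩⟩
    intro e heE heYF
    have heF : e ∉ F := fun h => heYF (Finset.mem_union_right _ h)
    have heY : e ∉ Y := fun h => heYF (Finset.mem_union_left _ h)
    have heEF : e ∈ M.E \ F := Finset.mem_sdiff.mpr ⟨heE, heF⟩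
    have h1 := hcond e heEF heY
    rw [con_r_of_subset hM hY, con_r_of_subset hM ?hins] at h1
    case hins => exact Finset.insert_subset heEF hY
    have e1 : insert e Y ∪ F = insert e (Y ∪ F) := by ext x; simp only [Finset.mem_union, Finset.mem_inter, Finset.mem_insert]; tauto
    rw [e1] at h1
    have h2 : M.r F ≤ M.r (Y ∪ F) := r_mono hM Finset.subset_union_right
    omega
  · rintro ⟨hY, hflat⟩
    rw [mem_flats_iff, con_E]
    refine ⟨hY, ?_⟩
    intro e he heY
    obtain ⟨heE, heF⟩ := Finset.mem_sdiff.mp he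
    have heYF : e ∉ Y ∪ F := by simp [heY, heF]
    have h1 := (mem_flats_iff.mp hflat).2 e heE heYF
    rw [con_r_of_subset hM hY, con_r_of_subset hM (Finset.insert_subset he hY)]
    have e1 : insert e Y ∪ F = insert e (Y ∪ F) := by ext x; simp only [Finset.mem_union, Finset.mem_inter, Finset.mem_insert]; tauto
    rw [e1]
    have h2 : M.r F ≤ M.r (Y ∪ F) := r_mono hM Finset.subset_union_right
    omega

theorem flats_con (hM : M.IsMatroid) {F : Finset α} (hF : F ∈ M.flats) :
    (M.con F).flats = (M.flats.filter (fun H => F ⊆ H)).image (· \ F) := by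
  ext Y
  rw [mem_flats_con_iff hM hF, Finset.mem_image]
  constructor
  · rintro ⟨hY, hflat⟩
    refine ⟨Y ∪ F, Finset.mem_filter.mpr ⟨hflat, Finset.subset_union_right⟩, ?_⟩
    rw [Finset.union_sdiff_right]
    exact Finset.sdiff_eq_self_of_disjoint (Finset.disjoint_left.mpr
      fun a ha => (Finset.mem_sdiff.mp (hY ha)).2)
  · rintro ⟨H, hH, rfl⟩
    obtain ⟨hHf, hFH⟩ := Finset.mem_filter.mp hH
    have hHE : H ⊆ M.E := subset_of_mem_flats hHf
    have e1 : H \ F ∪ F = H := Finset.sdiff_union_of_subset hFH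
    exact ⟨Finset.sdiff_subset_sdiff hHE (Finset.Subset.refl _), by rw [e1]; exact hHf⟩

theorem con_r_sdiff (hM : M.IsMatroid) {F H : Finset α} (hH : H ⊆ M.E) (hFH : F ⊆ H) :
    (M.con F).r (H \ F) = M.r H - M.r F := by
  rw [con_r_of_subset hM (Finset.sdiff_subset_sdiff hH (Finset.Subset.refl _)),
    Finset.sdiff_union_of_subset hFH]

theorem sdiff_injOn_filter {F : Finset α} :
    ∀ H₁ ∈ (M.flats.filter (fun H => F ⊆ H)), ∀ H₂ ∈ (M.flats.filter (fun H => F ⊆ H)),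
      H₁ \ F = H₂ \ F → H₁ = H₂ := by
  intro H₁ h₁ H₂ h₂ he
  have e₁ := Finset.sdiff_union_of_subset (Finset.mem_filter.mp h₁).2
  have e₂ := Finset.sdiff_union_of_subset (Finset.mem_filter.mp h₂).2
  rw [← e₁, ← e₂, he]

theorem con_con (hM : M.IsMatroid) {F H : Finset α} (hH : H ⊆ M.E) (hFH : F ⊆ H) :
    (M.con F).con (H \ F) = M.con H := by
  have hFE : F ⊆ M.E := hFH.trans hH
  have hg : (M.E \ F) \ (H \ F) = M.E \ H := by
    ext x; simp only [Finset.mem_sdiff, not_and, not_not]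
    constructor
    · rintro ⟨⟨hxE, hxF⟩, hx⟩
      exact ⟨hxE, fun hxH => hxF (hx hxH)⟩
    · rintro ⟨hxE, hxH⟩
      exact ⟨⟨hxE, fun hxF => hxH (hFH hxF)⟩, fun hxH' => absurd hxH' hxH⟩
  show PreMatroid.mk _ _ = PreMatroid.mk _ _
  rw [con_E, hg]
  congr 1
  funext A
  show (M.con F).r ((A ∩ (M.E \ H)) ∪ (H \ F)) - (M.con F).r (H \ F)
      = M.r ((A ∩ (M.E \ H)) ∪ H) - M.r H
  set B := A ∩ (M.E \ H) with hB
  have hBsub : B ⊆ M.E \ F := by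
    intro x hx
    obtain ⟨hxE, hxH⟩ := Finset.mem_sdiff.mp (Finset.mem_of_mem_inter_right hx)
    exact Finset.mem_sdiff.mpr ⟨hxE, fun h => hxH (hFH h)⟩
  have hsub2 : B ∪ (H \ F) ⊆ M.E \ F :=
    Finset.union_subset hBsub (Finset.sdiff_subset_sdiff hH (Finset.Subset.refl _))
  rw [con_r_of_subset hM hsub2, con_r_sdiff hM hH hFH]
  have e1 : B ∪ (H \ F) ∪ F = B ∪ H := by
    rw [Finset.union_assoc, Finset.sdiff_union_of_subset hFH]
  rw [e1]
  have m1 : M.r F ≤ M.r H := r_mono hM hFH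
  have m2 : M.r H ≤ M.r (B ∪ H) := r_mono hM Finset.subset_union_right
  omega

theorem loc_con (hM : M.IsMatroid) {F H : Finset α} (hH : H ⊆ M.E) (hFH : F ⊆ H) :
    (M.con F).loc (H \ F) = (M.loc H).con F := by
  show PreMatroid.mk _ _ = PreMatroid.mk _ _
  have hg : (M.loc H).E \ F = H \ F := rfl
  rw [hg]
  congr 1
  funext A
  show (M.con F).r (A ∩ (H \ F)) = (M.loc H).r ((A ∩ ((M.loc H).E \ F)) ∪ F) - (M.loc H).r F
  have h1 : A ∩ (H \ F) ⊆ M.E \ F :=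
    Finset.inter_subset_right.trans (Finset.sdiff_subset_sdiff hH (Finset.Subset.refl _))
  rw [con_r_of_subset hM h1, hg]
  have h2 : (A ∩ (H \ F)) ∪ F ⊆ H :=
    Finset.union_subset (Finset.inter_subset_right.trans Finset.sdiff_subset) hFH
  rw [loc_r_of_subset h2, loc_r_of_subset hFH]

theorem loc_loc {F H : Finset α} (hFH : F ⊆ H) : (M.loc H).loc F = M.loc F := by
  show PreMatroid.mk _ _ = PreMatroid.mk _ _
  congr 1
  funext A
  show M.r ((A ∩ F) ∩ H) = M.r (A ∩ F)
  rw [Finset.inter_eq_left.mpr (Finset.inter_subset_right.trans hFH)]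

end PreMatroid
end Chunk2
section Chunk3
namespace PreMatroid
variable {α : Type*} [DecidableEq α] {M : PreMatroid α}

theorem mu_eq_one {F : Finset α} (h : ¬(M.flats.filter fun G => G ⊂ F).Nonempty) :
    M.mu F = 1 := by
  rw [mu, if_neg h]

theorem mu_eq_neg_sum {F : Finset α} (h : (M.flats.filter fun G => G ⊂ F).Nonempty) :
    M.mu F = -∑ G ∈ M.flats.filter fun G => G ⊂ F, M.mu G := by
  rw [mu, if_pos h, Finset.sum_attach]

theorem sum_mu_subsets {X : Finset α} (hX : X ∈ M.flats)
    (h : (M.flats.filter fun G => G ⊂ X).Nonempty) :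
    ∑ G ∈ M.flats.filter (fun G => G ⊆ X), M.mu G = 0 := by
  have hsplit : M.flats.filter (fun G => G ⊆ X) = insert X (M.flats.filter fun G => G ⊂ X) := by
    ext G
    simp only [Finset.mem_filter, Finset.mem_insert]
    constructor
    · rintro ⟨hG, hGX⟩
      rcases eq_or_ne G X with rfl | hne
      · exact Or.inl rfl
      · exact Or.inr ⟨hG, Finset.ssubset_iff_subset_ne.mpr ⟨hGX, hne⟩⟩
    · rintro (rfl | ⟨hG, hGX⟩)
      · exact ⟨hX, Finset.Subset.refl _⟩
      · exact ⟨hG, hGX.1⟩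
  rw [hsplit, Finset.sum_insert (by simp only [Finset.mem_filter]; rintro ⟨-, h2⟩; exact h2.2 h2.1),
    mu_eq_neg_sum h]
  ring


theorem flats_loc (hM : M.IsMatroid) {F : Finset α} (hF : F ∈ M.flats) :
    (M.loc F).flats = M.flats.filter (fun G => G ⊆ F) := by
  have hFE := subset_of_mem_flats hF
  ext G
  rw [Finset.mem_filter, mem_flats_iff, mem_flats_iff, loc_E]
  constructor
  · rintro ⟨hGF, hcond⟩
    refine ⟨⟨hGF.trans hFE, ?_⟩, hGF⟩
    intro e heE heG
    by_cases heF : e ∈ F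
    · have h := hcond e heF heG
      rwa [loc_r_of_subset hGF, loc_r_of_subset (Finset.insert_subset heF hGF)] at h
    · by_contra hle
      have e1 : F ∪ insert e G = insert e F := by
        ext x
        simp only [Finset.mem_union, Finset.mem_insert]
        constructor
        · rintro (h | rfl | h)
          · exact Or.inr h
          · exact Or.inl rfl
          · exact Or.inr (hGF h)
        · rintro (rfl | h)
          · exact Or.inr (Or.inl rfl)
          · exact Or.inl h
      have e2 : F ∩ insert e G = G := by
        ext x
        simp only [Finset.mem_inter, Finset.mem_insert]
        constructor
        · rintro ⟨hxF, rfl | hxG⟩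
          · exact absurd hxF heF
          · exact hxG
        · intro hxG
          exact ⟨hGF hxG, Or.inr hxG⟩
      have hs := r_submod hM F (insert e G)
      rw [e1, e2] at hs
      have hflat := (mem_flats_iff.mp hF).2 e heE heF
      have hmono := r_mono hM (Finset.subset_insert e G)
      omega
  · rintro ⟨⟨hGE, hcond⟩, hGF⟩
    refine ⟨hGF, fun e heF heG => ?_⟩
    rw [loc_r_of_subset hGF, loc_r_of_subset (Finset.insert_subset heF hGF)]
    exact hcond e (hFE heF) heG

theorem mu_loc (hM : M.IsMatroid) {F : Finset α} (hF : F ∈ M.flats) :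
    ∀ (n : ℕ) (G : Finset α), G.card ≤ n → G ⊆ F → (M.loc F).mu G = M.mu G := by
  intro n
  induction n with
  | zero =>
    intro G hG hGF
    have hG0 : G = ∅ := Finset.card_eq_zero.mp (Nat.le_zero.mp hG)
    subst hG0
    rw [mu_eq_one (by simp [Finset.not_ssubset_empty]), mu_eq_one (by simp [Finset.not_ssubset_empty])]
  | succ n ih =>
    intro G hG hGF
    have hset : (M.loc F).flats.filter (fun G' => G' ⊂ G) = M.flats.filter (fun G' => G' ⊂ G) := by
      rw [flats_loc hM hF, Finset.filter_filter]
      apply Finset.filter_congr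
      intro x _
      exact ⟨fun h => h.2, fun hx => ⟨hx.1.trans hGF, hx⟩⟩
    by_cases hne : (M.flats.filter fun G' => G' ⊂ G).Nonempty
    · rw [mu_eq_neg_sum (by rw [hset]; exact hne), mu_eq_neg_sum hne, hset, neg_inj]
      apply Finset.sum_congr rfl
      intro G' hG'
      obtain ⟨hG'f, hG'G⟩ := Finset.mem_filter.mp hG'
      have hc : G'.card ≤ n := by
        have := Finset.card_lt_card hG'G
        omega
      exact ih G' hc (hG'G.1.trans hGF)
    · rw [mu_eq_one (by rw [hset]; exact hne), mu_eq_one hne]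

theorem sdiff_ssubset_sdiff_iff {L K H : Finset α} (hLK : L ⊆ K) (hLH : L ⊆ H) :
    K \ L ⊂ H \ L ↔ K ⊂ H := by
  have key : ∀ {A B : Finset α}, L ⊆ A → L ⊆ B → (A \ L ⊆ B \ L ↔ A ⊆ B) := by
    intro A B hLA hLB
    constructor
    · intro h
      have : A \ L ∪ L ⊆ B \ L ∪ L := Finset.union_subset_union h (Finset.Subset.refl _)
      rwa [Finset.sdiff_union_of_subset hLA, Finset.sdiff_union_of_subset hLB] at this
    · intro h
      exact Finset.sdiff_subset_sdiff h (Finset.Subset.refl _)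
  rw [Finset.ssubset_iff_subset_ne, Finset.ssubset_iff_subset_ne, key hLK hLH]
  constructor
  · rintro ⟨h1, h2⟩
    refine ⟨h1, fun h => h2 (by rw [h])⟩
  · rintro ⟨h1, h2⟩
    refine ⟨h1, fun h => h2 ?_⟩
    have := congrArg (· ∪ L) h
    simpa [Finset.sdiff_union_of_subset hLK, Finset.sdiff_union_of_subset hLH] using this

theorem mu_con_min (hM : M.IsMatroid) {L : Finset α} (hL : L ∈ M.flats)
    (hLmin : ∀ F ∈ M.flats, L ⊆ F) :
    ∀ (n : ℕ) (H : Finset α), H.card ≤ n → H ∈ M.flats → (M.con L).mu (H \ L) = M.mu H := by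
  have hLE : L ⊆ M.E := subset_of_mem_flats hL
  have hflats : (M.con L).flats = M.flats.image (· \ L) := by
    rw [flats_con hM hL, Finset.filter_true_of_mem (fun F hF => hLmin F hF)]
  have hsetkey : ∀ {H : Finset α}, H ∈ M.flats →
      (M.con L).flats.filter (fun Y => Y ⊂ H \ L) = (M.flats.filter (fun K => K ⊂ H)).image (· \ L) := by
    intro H hH
    rw [hflats]
    ext Y
    simp only [Finset.mem_filter, Finset.mem_image]
    constructor
    · rintro ⟨⟨K, hK, rfl⟩, hY⟩
      exact ⟨K, ⟨hK, (sdiff_ssubset_sdiff_iff (hLmin K hK) (hLmin H hH)).mp hY⟩, rfl⟩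
    · rintro ⟨K, ⟨hK, hKH⟩, rfl⟩
      exact ⟨⟨K, hK, rfl⟩, (sdiff_ssubset_sdiff_iff (hLmin K hK) (hLmin H hH)).mpr hKH⟩
  intro n
  induction n with
  | zero =>
    intro H hc hH
    have : H = ∅ := Finset.card_eq_zero.mp (Nat.le_zero.mp hc)
    subst this
    have hL0 : L = ∅ := Finset.subset_empty.mp (hLmin ∅ hH)
    subst hL0
    rw [mu_eq_one (by simp [Finset.not_ssubset_empty]), mu_eq_one (by simp [Finset.not_ssubset_empty])]
  | succ n ih =>
    intro H hc hH
    have himg := hsetkey hH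
    by_cases hne : (M.flats.filter fun K => K ⊂ H).Nonempty
    · have hne' : ((M.con L).flats.filter fun Y => Y ⊂ H \ L).Nonempty := by
        rw [himg]; exact hne.image _
      rw [mu_eq_neg_sum hne', mu_eq_neg_sum hne, himg, neg_inj]
      rw [Finset.sum_image (fun K₁ h₁ K₂ h₂ he => by
        have m₁ := Finset.mem_filter.mp h₁; have m₂ := Finset.mem_filter.mp h₂
        have e₁ := Finset.sdiff_union_of_subset (hLmin K₁ m₁.1)
        have e₂ := Finset.sdiff_union_of_subset (hLmin K₂ m₂.1)
        rw [← e₁, ← e₂, he])]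
      apply Finset.sum_congr rfl
      intro K hK
      obtain ⟨hKf, hKH⟩ := Finset.mem_filter.mp hK
      have : K.card ≤ n := by have := Finset.card_lt_card hKH; omega
      exact ih K this hKf
    · have hne' : ¬ ((M.con L).flats.filter fun Y => Y ⊂ H \ L).Nonempty := by
        rw [himg]
        intro ⟨y, hy⟩
        obtain ⟨K, hK, rfl⟩ := Finset.mem_image.mp hy
        exact hne ⟨K, hK⟩
      rw [mu_eq_one hne', mu_eq_one hne]

theorem natDegree_charPoly_le (N : PreMatroid α) : N.charPoly.natDegree ≤ N.rk := by
  apply Polynomial.natDegree_sum_le_of_forall_le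
  intro F _
  refine le_trans (Polynomial.natDegree_mul_le) ?_
  simp only [Polynomial.natDegree_C, Polynomial.natDegree_X_pow, zero_add]
  exact Nat.sub_le _ _

theorem flats_loc_empty : (M.loc ∅).flats = {∅} := by
  ext A
  rw [mem_flats_iff]
  simp [loc_E, Finset.subset_empty]

theorem charPoly_loc_empty (hM : M.IsMatroid) : (M.loc ∅).charPoly = 1 := by
  rw [charPoly, flats_loc_empty, Finset.sum_singleton,
    mu_eq_one (by simp [Finset.not_ssubset_empty])]
  have h1 : (M.loc ∅).rk = 0 := by rw [rk_loc]; exact r_empty hM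
  have h2 : (M.loc ∅).r ∅ = 0 := by rw [loc_r]; simpa using r_empty hM
  rw [h1, h2]
  simp

theorem charPoly_con_min (hM : M.IsMatroid) {L : Finset α} (hL : L ∈ M.flats)
    (hL0 : M.r L = 0) (hLmin : ∀ F ∈ M.flats, L ⊆ F) :
    (M.con L).charPoly = M.charPoly := by
  have hLE : L ⊆ M.E := subset_of_mem_flats hL
  rw [charPoly, charPoly, flats_con hM hL, Finset.filter_true_of_mem (fun F hF => hLmin F hF)]
  rw [Finset.sum_image (fun K₁ h₁ K₂ h₂ he => by
    have e₁ := Finset.sdiff_union_of_subset (hLmin K₁ h₁)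
    have e₂ := Finset.sdiff_union_of_subset (hLmin K₂ h₂)
    rw [← e₁, ← e₂, he])]
  apply Finset.sum_congr rfl
  intro H hH
  rw [mu_con_min hM hL hLmin H.card H (le_refl _) hH,
    con_r_sdiff hM (subset_of_mem_flats hH) (hLmin H hH), rk_con hM hLE, hL0]
  simp

end PreMatroid
end Chunk3
section Chunk4
namespace PreMatroid
variable {α : Type*} [DecidableEq α] {M : PreMatroid α}

theorem sdiff_subset_sdiff_iff {L K H : Finset α} (hLK : L ⊆ K) (hLH : L ⊆ H) :
    K \ L ⊆ H \ L ↔ K ⊆ H := by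
  constructor
  · intro h
    have h2 : K \ L ∪ L ⊆ H \ L ∪ L := Finset.union_subset_union h (Finset.Subset.refl _)
    rwa [Finset.sdiff_union_of_subset hLK, Finset.sdiff_union_of_subset hLH] at h2
  · intro h
    exact Finset.sdiff_subset_sdiff h (Finset.Subset.refl _)

theorem sum_nu_row (hM : M.IsMatroid) {F H : Finset α} (hF : F ∈ M.flats) (hH : H ∈ M.flats)
    (hFH : F ⊆ H) :
    ∑ H' ∈ M.flats.filter (fun H' => F ⊆ H' ∧ H' ⊆ H), (M.con F).mu (H' \ F)
      = if F = H then 1 else 0 := by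
  have hFE := subset_of_mem_flats hF
  by_cases heq : F = H
  · subst heq
    rw [if_pos rfl]
    have hs : M.flats.filter (fun H' => F ⊆ H' ∧ H' ⊆ F) = {F} := by
      ext H'
      simp only [Finset.mem_filter, Finset.mem_singleton]
      constructor
      · rintro ⟨_, h2, h3⟩
        exact Finset.Subset.antisymm h3 h2
      · rintro rfl
        exact ⟨hF, Finset.Subset.refl _, Finset.Subset.refl _⟩
    rw [hs, Finset.sum_singleton, Finset.sdiff_self,
      mu_eq_one (by simp [Finset.not_ssubset_empty])]
  · rw [if_neg heq]
    have hinj : ∀ K₁ ∈ M.flats.filter (fun H' => F ⊆ H' ∧ H' ⊆ H),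
        ∀ K₂ ∈ M.flats.filter (fun H' => F ⊆ H' ∧ H' ⊆ H), K₁ \ F = K₂ \ F → K₁ = K₂ := by
      intro K₁ h₁ K₂ h₂ he
      have e₁ := Finset.sdiff_union_of_subset (Finset.mem_filter.mp h₁).2.1
      have e₂ := Finset.sdiff_union_of_subset (Finset.mem_filter.mp h₂).2.1
      rw [← e₁, ← e₂, he]
    have himg : ((M.con F).flats).filter (fun Y => Y ⊆ H \ F)
        = (M.flats.filter (fun H' => F ⊆ H' ∧ H' ⊆ H)).image (· \ F) := by
      rw [flats_con hM hF]
      ext Y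
      simp only [Finset.mem_filter, Finset.mem_image]
      constructor
      · rintro ⟨⟨K, hK, rfl⟩, hY⟩
        obtain ⟨hKf, hFK⟩ : K ∈ M.flats ∧ F ⊆ K := hK
        exact ⟨K, ⟨hKf, hFK, (sdiff_subset_sdiff_iff hFK hFH).mp hY⟩, rfl⟩
      · rintro ⟨K, hK, rfl⟩
        obtain ⟨hKf, hFK, hKH⟩ : K ∈ M.flats ∧ F ⊆ K ∧ K ⊆ H := hK
        exact ⟨⟨K, ⟨hKf, hFK⟩, rfl⟩, (sdiff_subset_sdiff_iff hFK hFH).mpr hKH⟩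
    rw [← Finset.sum_image hinj, ← himg]
    apply sum_mu_subsets
    · rw [flats_con hM hF]
      exact Finset.mem_image_of_mem _ (Finset.mem_filter.mpr ⟨hH, hFH⟩)
    · refine ⟨∅, Finset.mem_filter.mpr ⟨?_, ?_⟩⟩
      · rw [flats_con hM hF]
        refine Finset.mem_image.mpr ⟨F, Finset.mem_filter.mpr ⟨hF, Finset.Subset.refl _⟩, Finset.sdiff_self F⟩
      · rw [Finset.ssubset_iff_subset_ne]
        refine ⟨Finset.empty_subset _, fun h => ?_⟩
        have : H ⊆ F := Finset.sdiff_eq_empty_iff_subset.mp h.symm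
        exact heq (Finset.Subset.antisymm hFH this)

theorem sum_nu_col (hM : M.IsMatroid) :
    ∀ (n : ℕ) {G H : Finset α}, H.card ≤ n → G ∈ M.flats → H ∈ M.flats → G ⊆ H →
    ∑ F ∈ M.flats.filter (fun F => G ⊆ F ∧ F ⊆ H), (M.con F).mu (H \ F)
      = if G = H then 1 else 0 := by
  have base : ∀ {G : Finset α}, G ∈ M.flats →
      ∑ F ∈ M.flats.filter (fun F => G ⊆ F ∧ F ⊆ G), (M.con F).mu (G \ F) = 1 := by
    intro G hG
    have hs : M.flats.filter (fun F => G ⊆ F ∧ F ⊆ G) = {G} := by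
      ext F
      simp only [Finset.mem_filter, Finset.mem_singleton]
      constructor
      · rintro ⟨_, h2, h3⟩
        exact Finset.Subset.antisymm h3 h2
      · rintro rfl
        exact ⟨hG, Finset.Subset.refl _, Finset.Subset.refl _⟩
    rw [hs, Finset.sum_singleton, Finset.sdiff_self,
      mu_eq_one (by simp [Finset.not_ssubset_empty])]
  intro n
  induction n with
  | zero =>
    intro G H hc hG hH hGH
    have hH0 : H = ∅ := Finset.card_eq_zero.mp (Nat.le_zero.mp hc)
    subst hH0
    have hG0 : G = ∅ := Finset.subset_empty.mp hGH
    subst hG0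
    rw [if_pos rfl]
    exact base hG
  | succ n ih =>
    intro G H hc hG hH hGH
    by_cases heq : G = H
    · subst heq
      rw [if_pos rfl]
      exact base hG
    · rw [if_neg heq]
      have stepA : (∑ F ∈ M.flats, ∑ H' ∈ M.flats,
          if G ⊆ F ∧ F ⊆ H' ∧ H' ⊆ H then (M.con F).mu (H' \ F) else 0) = 1 := by
        have hinner : ∀ F ∈ M.flats, (∑ H' ∈ M.flats,
            if G ⊆ F ∧ F ⊆ H' ∧ H' ⊆ H then (M.con F).mu (H' \ F) else 0)
              = if F = H then 1 else 0 := by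
          intro F hF
          by_cases hGF : G ⊆ F
          · by_cases hFHs : F ⊆ H
            · rw [← sum_nu_row hM hF hH hFHs, Finset.sum_filter]
              apply Finset.sum_congr rfl
              intro H' _
              congr 1
              simp only [eq_iff_iff]
              tauto
            · rw [if_neg (fun h => hFHs (by rw [h]))]
              apply Finset.sum_eq_zero
              intro H' _
              rw [if_neg]
              rintro ⟨-, h2, h3⟩
              exact hFHs (h2.trans h3)
          · have hFH' : F ≠ H := fun h => hGF (h ▸ hGH)
            rw [if_neg hFH']
            apply Finset.sum_eq_zero
            intro H' _
            rw [if_neg]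
            rintro ⟨h1, -, -⟩
            exact hGF h1
        rw [Finset.sum_congr rfl hinner, Finset.sum_ite_eq' M.flats H (fun _ => (1:ℤ)), if_pos hH]
      have stepB : (∑ F ∈ M.flats, ∑ H' ∈ M.flats,
          if G ⊆ F ∧ F ⊆ H' ∧ H' ⊆ H then (M.con F).mu (H' \ F) else 0)
            = ∑ H' ∈ M.flats, if G ⊆ H' ∧ H' ⊆ H then
                (∑ F ∈ M.flats.filter (fun F => G ⊆ F ∧ F ⊆ H'), (M.con F).mu (H' \ F)) else 0 := by
        rw [Finset.sum_comm]
        apply Finset.sum_congr rfl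
        intro H' _
        by_cases hcond : G ⊆ H' ∧ H' ⊆ H
        · rw [if_pos hcond, Finset.sum_filter]
          apply Finset.sum_congr rfl
          intro F _
          congr 1
          simp only [eq_iff_iff]
          constructor
          · rintro ⟨h1, h2, -⟩; exact ⟨h1, h2⟩
          · rintro ⟨h1, h2⟩; exact ⟨h1, h2, hcond.2⟩
        · rw [if_neg hcond]
          apply Finset.sum_eq_zero
          intro F _
          rw [if_neg]
          rintro ⟨h1, h2, h3⟩
          exact hcond ⟨h1.trans h2, h3⟩
      have hkey : ∀ H' ∈ M.flats.erase H,
          (if G ⊆ H' ∧ H' ⊆ H then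
            (∑ F ∈ M.flats.filter (fun F => G ⊆ F ∧ F ⊆ H'), (M.con F).mu (H' \ F)) else 0)
            = if G = H' then 1 else 0 := by
        intro H' hH'
        obtain ⟨hne, hH'f⟩ := Finset.mem_erase.mp hH'
        by_cases hcond : G ⊆ H' ∧ H' ⊆ H
        · rw [if_pos hcond]
          have hss : H' ⊂ H := Finset.ssubset_iff_subset_ne.mpr ⟨hcond.2, hne⟩
          have hcard : H'.card ≤ n := by
            have := Finset.card_lt_card hss
            omega
          exact ih hcard hG hH'f hcond.1
        · rw [if_neg hcond, if_neg]
          rintro rfl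
          exact hcond ⟨Finset.Subset.refl _, hGH⟩
      have hsplit := Finset.add_sum_erase M.flats
        (fun H' => if G ⊆ H' ∧ H' ⊆ H then
          (∑ F ∈ M.flats.filter (fun F => G ⊆ F ∧ F ⊆ H'), (M.con F).mu (H' \ F)) else 0) hH
      rw [stepB, ← hsplit] at stepA
      rw [Finset.sum_congr rfl hkey, Finset.sum_ite_eq (M.flats.erase H) G (fun _ => (1:ℤ)),
        if_pos (Finset.mem_erase.mpr ⟨heq, hG⟩), if_pos ⟨hGH, Finset.Subset.refl H⟩] at stepA
      linarith [stepA]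
end PreMatroid
end Chunk4
section Chunk5
namespace PreMatroid
variable {α : Type*} [DecidableEq α] {M : PreMatroid α}

theorem reflect_sum {ι : Type*} (s : Finset ι) (f : ι → Polynomial ℤ) (N : ℕ) :
    Polynomial.reflect N (∑ i ∈ s, f i) = ∑ i ∈ s, Polynomial.reflect N (f i) := by
  classical
  induction s using Finset.induction_on with
  | empty => simp
  | @insert a s ha ih =>
    rw [Finset.sum_insert ha, Finset.sum_insert ha, Polynomial.reflect_add, ih]

theorem reflect_reflect (p : Polynomial ℤ) (N : ℕ) :
    Polynomial.reflect N (Polynomial.reflect N p) = p := by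
  ext i
  simp [Polynomial.coeff_reflect, Polynomial.revAt_invol]

theorem reflect_charPoly_loc (hM : M.IsMatroid) {F : Finset α} (hF : F ∈ M.flats) :
    Polynomial.reflect (M.r F) ((M.loc F).charPoly)
      = ∑ G ∈ M.flats.filter (fun G => G ⊆ F), C (M.mu G) * X ^ (M.r G) := by
  rw [charPoly, reflect_sum, flats_loc hM hF]
  apply Finset.sum_congr rfl
  intro G hG
  obtain ⟨hGf, hGF⟩ := Finset.mem_filter.mp hG
  rw [mu_loc hM hF G.card G (le_refl _) hGF, rk_loc, loc_r_of_subset hGF,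
    Polynomial.reflect_C_mul_X_pow, Polynomial.revAt_le (Nat.sub_le _ _)]
  have h : M.r F - (M.r F - M.r G) = M.r G := by
    have := r_mono hM hGF
    omega
  rw [h]

theorem charPoly_con_eq (hM : M.IsMatroid) {F : Finset α} (hF : F ∈ M.flats) :
    (M.con F).charPoly
      = ∑ H ∈ M.flats.filter (fun H => F ⊆ H), C ((M.con F).mu (H \ F)) * X ^ (M.rk - M.r H) := by
  have hFE := subset_of_mem_flats hF
  rw [charPoly, flats_con hM hF, Finset.sum_image (fun K₁ h₁ K₂ h₂ he => by
    have e₁ := Finset.sdiff_union_of_subset (Finset.mem_filter.mp h₁).2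
    have e₂ := Finset.sdiff_union_of_subset (Finset.mem_filter.mp h₂).2
    rw [← e₁, ← e₂, he])]
  apply Finset.sum_congr rfl
  intro H hH
  obtain ⟨hHf, hFH⟩ := Finset.mem_filter.mp hH
  have hHE := subset_of_mem_flats hHf
  rw [rk_con hM hFE, con_r_sdiff hM hHE hFH]
  congr 2
  have h1 : M.r F ≤ M.r H := r_mono hM hFH
  have h2 : M.r H ≤ M.rk := r_le_rk hM hHE
  omega

theorem key_identity (hM : M.IsMatroid) (h0 : ∅ ∈ M.flats) (hrk : 0 < M.rk) :
    ∑ F ∈ M.flats, (Polynomial.reflect (M.r F) ((M.loc F).charPoly)) * (M.con F).charPoly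
      = 0 := by
  have hstep1 : ∀ F ∈ M.flats,
      (Polynomial.reflect (M.r F) ((M.loc F).charPoly)) * (M.con F).charPoly
        = ∑ G ∈ M.flats, ∑ H ∈ M.flats,
            (if G ⊆ F then C (M.mu G) * X ^ (M.r G) else 0) *
            (if F ⊆ H then C ((M.con F).mu (H \ F)) * X ^ (M.rk - M.r H) else 0) := by
    intro F hF
    rw [reflect_charPoly_loc hM hF, charPoly_con_eq hM hF, Finset.sum_filter, Finset.sum_filter,
      Finset.sum_mul_sum]
  rw [Finset.sum_congr rfl hstep1, Finset.sum_comm]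
  have hswap : ∀ G ∈ M.flats, (∑ F ∈ M.flats, ∑ H ∈ M.flats,
      (if G ⊆ F then C (M.mu G) * X ^ (M.r G) else 0) *
      (if F ⊆ H then C ((M.con F).mu (H \ F)) * X ^ (M.rk - M.r H) else 0))
        = ∑ H ∈ M.flats, ∑ F ∈ M.flats,
      (if G ⊆ F then C (M.mu G) * X ^ (M.r G) else 0) *
      (if F ⊆ H then C ((M.con F).mu (H \ F)) * X ^ (M.rk - M.r H) else 0) :=
    fun G _ => Finset.sum_comm
  rw [Finset.sum_congr rfl hswap]
  have hinner : ∀ G ∈ M.flats, (∑ H ∈ M.flats, ∑ F ∈ M.flats,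
      (if G ⊆ F then C (M.mu G) * X ^ (M.r G) else 0) *
      (if F ⊆ H then C ((M.con F).mu (H \ F)) * X ^ (M.rk - M.r H) else 0))
        = C (M.mu G) * X ^ M.rk := by
    intro G hG
    have hHsum : ∀ H ∈ M.flats, (∑ F ∈ M.flats,
        (if G ⊆ F then C (M.mu G) * X ^ (M.r G) else 0) *
        (if F ⊆ H then C ((M.con F).mu (H \ F)) * X ^ (M.rk - M.r H) else 0))
          = if G = H then C (M.mu G) * X ^ (M.r G) * X ^ (M.rk - M.r H) else 0 := by
      intro H hH
      have hbody : ∀ F ∈ M.flats,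
          (if G ⊆ F then C (M.mu G) * X ^ (M.r G) else 0) *
          (if F ⊆ H then C ((M.con F).mu (H \ F)) * X ^ (M.rk - M.r H) else 0)
            = (C (M.mu G) * X ^ (M.r G) * X ^ (M.rk - M.r H)) *
              (if G ⊆ F ∧ F ⊆ H then C ((M.con F).mu (H \ F)) else 0) := by
        intro F _
        by_cases h1 : G ⊆ F <;> by_cases h2 : F ⊆ H <;>
          simp only [h1, h2, if_pos, if_neg, if_true, if_false, true_and, false_and,
            and_true, and_false, zero_mul, mul_zero] <;> ring
      rw [Finset.sum_congr rfl hbody, ← Finset.mul_sum]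
      have hCsum : (∑ F ∈ M.flats, if G ⊆ F ∧ F ⊆ H then C ((M.con F).mu (H \ F)) else 0)
          = C (∑ F ∈ M.flats, if G ⊆ F ∧ F ⊆ H then ((M.con F).mu (H \ F)) else 0) := by
        rw [map_sum]
        apply Finset.sum_congr rfl
        intro F _
        rw [apply_ite C, map_zero]
      rw [hCsum]
      have hval : (∑ F ∈ M.flats, if G ⊆ F ∧ F ⊆ H then ((M.con F).mu (H \ F)) else 0)
          = if G = H then 1 else 0 := by
        by_cases hGH : G ⊆ H
        · rw [← Finset.sum_filter]
          exact sum_nu_col hM H.card (le_refl _) hG hH hGH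
        · have hz : (∑ F ∈ M.flats, if G ⊆ F ∧ F ⊆ H then ((M.con F).mu (H \ F)) else 0) = 0 := by
            apply Finset.sum_eq_zero
            intro F _
            rw [if_neg]
            rintro ⟨hh1, hh2⟩
            exact hGH (hh1.trans hh2)
          rw [hz, if_neg (fun h => hGH (show G ⊆ H by rw [h]))]
      rw [hval]
      split_ifs with h
      · rw [map_one, mul_one]
      · rw [map_zero, mul_zero]
    rw [Finset.sum_congr rfl hHsum, Finset.sum_ite_eq M.flats G _, if_pos hG, mul_assoc,
      ← pow_add]
    congr 2
    have := r_le_rk hM (subset_of_mem_flats hG)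
    omega
  rw [Finset.sum_congr rfl hinner, ← Finset.sum_mul, ← map_sum]
  have hzero : ∑ G ∈ M.flats, M.mu G = 0 := by
    have hEne : M.E ≠ ∅ := by
      intro h
      rw [rk, h, r_empty hM] at hrk
      omega
    have hne : (M.flats.filter fun G => G ⊂ M.E).Nonempty := by
      refine ⟨∅, Finset.mem_filter.mpr ⟨h0, ?_⟩⟩
      rw [Finset.ssubset_iff_subset_ne]
      exact ⟨Finset.empty_subset _, fun h => hEne h.symm⟩
    have := sum_mu_subsets ground_mem_flats hne
    rwa [Finset.filter_true_of_mem (fun F hF => subset_of_mem_flats hF)] at this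
  rw [hzero, map_zero, zero_mul]

end PreMatroid
end Chunk5
section Chunk6
namespace PreMatroid
variable {α : Type*} [DecidableEq α] {M : PreMatroid α}

/-- Truncation used in the construction of the KL polynomial. -/
noncomputable def trunc (d : ℕ) (Q : Polynomial ℤ) : Polynomial ℤ :=
  ∑ k ∈ (Finset.range d).filter (fun k => 2*k < d), Polynomial.monomial k (-Q.coeff k)

theorem trunc_coeff (d : ℕ) (Q : Polynomial ℤ) (i : ℕ) :
    (trunc d Q).coeff i = if 2*i < d then -Q.coeff i else 0 := by
  rw [trunc, Polynomial.finset_sum_coeff]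
  simp only [Polynomial.coeff_monomial]
  rw [Finset.sum_ite_eq' _ i (fun k => -Q.coeff k)]
  simp only [Finset.mem_filter, Finset.mem_range]
  by_cases h : 2*i < d
  · rw [if_pos ⟨by omega, h⟩, if_pos h]
  · rw [if_neg (fun hc => h hc.2), if_neg h]

theorem trunc_natDegree {d : ℕ} (hd : 0 < d) (Q : Polynomial ℤ) :
    2 * (trunc d Q).natDegree < d := by
  have h : (trunc d Q).natDegree ≤ (d-1)/2 := by
    apply Polynomial.natDegree_sum_le_of_forall_le
    intro k hk
    obtain ⟨-, hk2⟩ := Finset.mem_filter.mp hk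
    exact le_trans (Polynomial.natDegree_monomial_le _) (by omega)
  omega

theorem trunc_reflect {d : ℕ} (hd : 0 < d) (Q : Polynomial ℤ) (hdeg : Q.natDegree ≤ d)
    (hanti : ∀ k, k ≤ d → Q.coeff (d - k) = -Q.coeff k) :
    Polynomial.reflect d (trunc d Q) = trunc d Q + Q := by
  ext i
  rw [Polynomial.coeff_reflect, Polynomial.coeff_add]
  by_cases hi : i ≤ d
  · rw [Polynomial.revAt_le hi, trunc_coeff, trunc_coeff]
    have hanti' := hanti i hi
    by_cases h1 : 2*i < d
    · rw [if_neg (by omega), if_pos h1]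
      ring
    · by_cases h2 : 2*i = d
      · rw [if_neg (by omega), if_neg h1, zero_add]
        have he : d - i = i := by omega
        rw [he] at hanti'
        linarith
      · rw [if_pos (by omega), if_neg h1, zero_add, hanti']
        ring
  · rw [Polynomial.revAt_eq_self_of_lt (by omega), trunc_coeff,
      Polynomial.coeff_eq_zero_of_natDegree_lt (lt_of_le_of_lt hdeg (by omega)),
      if_neg (by omega), add_zero]

/-- The Kazhdan–Lusztig polynomial of a (pre)matroid, defined by the EPW recursion. -/
noncomputable def KL (M : PreMatroid α) : Polynomial ℤ :=
  if h1 : M.loops.Nonempty then KL (M.con M.loops)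
  else if h2 : M.rk = 0 then 1
  else ∑ k ∈ (Finset.range M.rk).filter (fun k => 2*k < M.rk),
    Polynomial.monomial k
      (-(∑ F ∈ (M.flats.filter (fun F => F ≠ ∅)).attach,
          ((M.loc F.1).charPoly * KL (M.con F.1))).coeff k)
termination_by M.E.card
decreasing_by
  · exact Finset.card_lt_card (Finset.sdiff_ssubset (Finset.filter_subset _ _) h1)
  · have hF := F.2
    obtain ⟨hFf, hFne⟩ := Finset.mem_filter.mp hF
    exact Finset.card_lt_card (Finset.sdiff_ssubset (subset_of_mem_flats hFf)
      (Finset.nonempty_iff_ne_empty.mpr hFne))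

theorem KL_loopy (h1 : M.loops.Nonempty) : KL M = KL (M.con M.loops) := by
  rw [KL, dif_pos h1]

theorem KL_rk0 (h1 : ¬ M.loops.Nonempty) (h2 : M.rk = 0) : KL M = 1 := by
  rw [KL, dif_neg h1, dif_pos h2]

theorem KL_pos (h1 : ¬ M.loops.Nonempty) (h2 : ¬ M.rk = 0) :
    KL M = trunc M.rk
      (∑ F ∈ M.flats.filter (fun F => F ≠ ∅), ((M.loc F).charPoly * KL (M.con F))) := by
  rw [KL, dif_neg h1, dif_neg h2, trunc]
  simp only [Finset.sum_attach (M.flats.filter (fun F => F ≠ ∅))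
    (fun F => ((M.loc F).charPoly * KL (M.con F)))]

theorem con_sum (hM : M.IsMatroid) {F : Finset α} (hF : F ∈ M.flats)
    (g : PreMatroid α → Polynomial ℤ) :
    ∑ Y ∈ (M.con F).flats, ((M.con F).loc Y).charPoly * g ((M.con F).con Y)
      = ∑ H ∈ M.flats.filter (fun H => F ⊆ H), ((M.loc H).con F).charPoly * g (M.con H) := by
  rw [flats_con hM hF, Finset.sum_image (fun K₁ h₁ K₂ h₂ he => by
    have e₁ := Finset.sdiff_union_of_subset (Finset.mem_filter.mp h₁).2
    have e₂ := Finset.sdiff_union_of_subset (Finset.mem_filter.mp h₂).2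
    rw [← e₁, ← e₂, he])]
  apply Finset.sum_congr rfl
  intro H hH
  obtain ⟨hHf, hFH⟩ := Finset.mem_filter.mp hH
  have hHE := subset_of_mem_flats hHf
  rw [loc_con hM hHE hFH, con_con hM hHE hFH]

end PreMatroid
end Chunk6
section Chunk7
namespace PreMatroid
variable {α : Type*} [DecidableEq α] {M : PreMatroid α}

theorem reflect_one_zero : Polynomial.reflect 0 (1 : Polynomial ℤ) = 1 := by
  have h : (1 : Polynomial ℤ) = Polynomial.C 1 * X ^ 0 := by simp
  rw [h, Polynomial.reflect_C_mul_X_pow]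
  simp

theorem KL_spec : ∀ (n : ℕ) (M : PreMatroid α), M.E.card < n → M.IsMatroid →
    (M.rk = 0 → KL M = 1) ∧ (0 < M.rk → 2 * (KL M).natDegree < M.rk) ∧
    (KL M).reflect M.rk = ∑ F ∈ M.flats, (M.loc F).charPoly * KL (M.con F) := by
  intro n
  induction n with
  | zero => intro M h; omega
  | succ n ih =>
    intro M hcard hM
    by_cases hL : M.loops.Nonempty
    · -- loopy case
      have hLf : M.loops ∈ M.flats := loops_mem_flats hM
      have hLE : M.loops ⊆ M.E := subset_of_mem_flats hLf
      have hL0 : M.r M.loops = 0 := r_loops hM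
      have hM' : (M.con M.loops).IsMatroid := hM.con hLE
      have hcard' : (M.con M.loops).E.card < n := by
        have h2 := Finset.card_lt_card (Finset.sdiff_ssubset hLE hL)
        rw [con_E]
        omega
      obtain ⟨ih1, ih2, ih3⟩ := ih (M.con M.loops) hcard' hM'
      have hKL : KL M = KL (M.con M.loops) := KL_loopy hL
      have hrk : (M.con M.loops).rk = M.rk := by
        rw [rk_con hM hLE, hL0, Nat.sub_zero]
      refine ⟨?_, ?_, ?_⟩
      · intro h0
        rw [hKL]
        exact ih1 (by rw [hrk, h0])
      · intro hpos
        rw [hKL]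
        have h2 := ih2 (by rw [hrk]; exact hpos)
        rwa [hrk] at h2
      · rw [hKL, ← hrk, ih3, con_sum hM hLf KL,
          Finset.filter_true_of_mem (fun F hF => loops_subset_flat hM hF)]
        apply Finset.sum_congr rfl
        intro H hH
        congr 1
        have hNM : (M.loc H).IsMatroid := hM.loc H
        have hHE := subset_of_mem_flats hH
        have hloopsN : (M.loc H).loops = M.loops := by
          ext e
          simp only [loops, Finset.mem_filter]
          simp only [loc_E, loc_r]
          constructor
          · rintro ⟨heH, her⟩
            rw [Finset.inter_eq_left.mpr (Finset.singleton_subset_iff.mpr heH)] at her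
            exact ⟨hHE heH, her⟩
          · rintro ⟨heE, her⟩
            have heH : e ∈ H := loops_subset_flat hM hH (Finset.mem_filter.mpr ⟨heE, her⟩)
            rw [Finset.inter_eq_left.mpr (Finset.singleton_subset_iff.mpr heH)]
            exact ⟨heH, her⟩
        rw [← hloopsN]
        exact charPoly_con_min hNM (loops_mem_flats hNM) (r_loops hNM)
          (fun F hF => loops_subset_flat hNM hF)
    · -- loopless case
      have hLe : M.loops = ∅ := Finset.not_nonempty_iff_eq_empty.mp hL
      have h0 : ∅ ∈ M.flats := (empty_mem_flats_iff hM).mpr hLe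
      by_cases hd : M.rk = 0
      · have hKL1 : KL M = 1 := KL_rk0 hL hd
        have hE : M.E = ∅ := by
          rw [Finset.eq_empty_iff_forall_notMem]
          intro e he
          have h1 : 1 ≤ M.r {e} := one_le_r_singleton hM he
            (by rw [hLe]; exact Finset.notMem_empty e)
          have h2 : M.r {e} ≤ M.rk := r_le_rk hM (Finset.singleton_subset_iff.mpr he)
          omega
        have hflats : M.flats = {∅} := by
          ext F
          rw [mem_flats_iff, hE]
          simp [Finset.subset_empty]
        refine ⟨fun _ => hKL1, fun hpos => absurd hd (by omega), ?_⟩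
        rw [hKL1, hflats, Finset.sum_singleton, con_empty hM, hKL1, hd,
          charPoly_loc_empty hM, reflect_one_zero, mul_one]
      · -- loopless positive rank
        have hdpos : 0 < M.rk := by omega
        set Q := ∑ F ∈ M.flats.filter (fun F => F ≠ ∅),
          ((M.loc F).charPoly * KL (M.con F)) with hQdef
        have hKLM : KL M = trunc M.rk Q := KL_pos hL hd
        have hih : ∀ F ∈ M.flats, F ≠ ∅ →
            ((M.con F).rk = 0 → KL (M.con F) = 1) ∧
            (0 < (M.con F).rk → 2*(KL (M.con F)).natDegree < (M.con F).rk) ∧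
            (KL (M.con F)).reflect (M.con F).rk
              = ∑ Y ∈ (M.con F).flats, ((M.con F).loc Y).charPoly * KL ((M.con F).con Y) := by
          intro F hF hFne
          apply ih
          · have h2 := Finset.card_lt_card (Finset.sdiff_ssubset (subset_of_mem_flats hF)
              (Finset.nonempty_iff_ne_empty.mpr hFne))
            rw [con_E]
            omega
          · exact hM.con (subset_of_mem_flats hF)
        have hKdeg : ∀ F ∈ M.flats, F ≠ ∅ → (KL (M.con F)).natDegree ≤ M.rk - M.r F := by
          intro F hF hFne
          obtain ⟨i1, i2, -⟩ := hih F hF hFne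
          have hrkc : (M.con F).rk = M.rk - M.r F := rk_con hM (subset_of_mem_flats hF)
          by_cases hc : (M.con F).rk = 0
          · rw [i1 hc, Polynomial.natDegree_one]
            omega
          · have h3 := i2 (by omega)
            omega
        have hcdeg : ∀ F ∈ M.flats, ((M.loc F).charPoly).natDegree ≤ M.r F := by
          intro F hF
          have h1 := natDegree_charPoly_le (M.loc F)
          rwa [rk_loc] at h1
        have hQdeg : Q.natDegree ≤ M.rk := by
          rw [hQdef]
          apply Polynomial.natDegree_sum_le_of_forall_le
          intro F hF
          obtain ⟨hFf, hFne⟩ := Finset.mem_filter.mp hF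
          refine le_trans (Polynomial.natDegree_mul_le) ?_
          have h1 := hcdeg F hFf
          have h2 := hKdeg F hFf hFne
          have h3 : M.r F ≤ M.rk := r_le_rk hM (subset_of_mem_flats hFf)
          omega
        have hsym : Polynomial.reflect M.rk Q = -Q := by
          rw [hQdef, reflect_sum]
          have hterm : ∀ F ∈ M.flats.filter (fun F => F ≠ ∅),
              Polynomial.reflect M.rk ((M.loc F).charPoly * KL (M.con F))
                = ∑ H ∈ M.flats, (if F ⊆ H then
                    (Polynomial.reflect (M.r F) ((M.loc F).charPoly)) *
                      (((M.loc H).con F).charPoly * KL (M.con H)) else 0) := by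
            intro F hF
            obtain ⟨hFf, hFne⟩ := Finset.mem_filter.mp hF
            have hFE := subset_of_mem_flats hFf
            have hrF : M.r F ≤ M.rk := r_le_rk hM hFE
            have hmul := Polynomial.reflect_mul ((M.loc F).charPoly) (KL (M.con F))
              (hcdeg F hFf) (hKdeg F hFf hFne)
            rw [show M.r F + (M.rk - M.r F) = M.rk by omega] at hmul
            rw [hmul]
            have hrkc : (M.con F).rk = M.rk - M.r F := rk_con hM hFE
            rw [← hrkc, (hih F hFf hFne).2.2, con_sum hM hFf KL, Finset.mul_sum,
              Finset.sum_filter]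
          rw [Finset.sum_congr rfl hterm, Finset.sum_filter]
          have hpush : ∀ F ∈ M.flats,
              (if F ≠ ∅ then (∑ H ∈ M.flats, if F ⊆ H then
                  (Polynomial.reflect (M.r F) ((M.loc F).charPoly)) *
                    (((M.loc H).con F).charPoly * KL (M.con H)) else 0) else 0)
                = ∑ H ∈ M.flats, (if F ≠ ∅ ∧ F ⊆ H then
                  (Polynomial.reflect (M.r F) ((M.loc F).charPoly)) *
                    (((M.loc H).con F).charPoly * KL (M.con H)) else 0) := by
            intro F _
            by_cases hFe : F = ∅
            · rw [if_neg (by simp [hFe])]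
              symm
              apply Finset.sum_eq_zero
              intro H _
              rw [if_neg]
              rintro ⟨h1, -⟩
              exact h1 hFe
            · rw [if_pos hFe]
              apply Finset.sum_congr rfl
              intro H _
              congr 1
              simp only [eq_iff_iff]
              tauto
          rw [Finset.sum_congr rfl hpush, Finset.sum_comm]
          have hHterm : ∀ H ∈ M.flats,
              (∑ F ∈ M.flats, if F ≠ ∅ ∧ F ⊆ H then
                  (Polynomial.reflect (M.r F) ((M.loc F).charPoly)) *
                    (((M.loc H).con F).charPoly * KL (M.con H)) else 0)
                = (if H = ∅ then 0 else -((M.loc H).charPoly * KL (M.con H))) := by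
            intro H hH
            by_cases hHe : H = ∅
            · rw [if_pos hHe]
              apply Finset.sum_eq_zero
              intro F _
              rw [if_neg]
              rintro ⟨h1, h2⟩
              exact h1 (Finset.subset_empty.mp (hHe ▸ h2))
            · rw [if_neg hHe]
              have hfac : ∀ F ∈ M.flats,
                  (if F ≠ ∅ ∧ F ⊆ H then
                    (Polynomial.reflect (M.r F) ((M.loc F).charPoly)) *
                      (((M.loc H).con F).charPoly * KL (M.con H)) else 0)
                  = (if F ≠ ∅ ∧ F ⊆ H then
                      (Polynomial.reflect (M.r F) ((M.loc F).charPoly)) *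
                        ((M.loc H).con F).charPoly else 0) * KL (M.con H) := by
                intro F _
                split_ifs
                · rw [mul_assoc]
                · rw [zero_mul]
              rw [Finset.sum_congr rfl hfac, ← Finset.sum_mul]
              have hNM : (M.loc H).IsMatroid := hM.loc H
              have h0N : ∅ ∈ (M.loc H).flats := by
                rw [flats_loc hM hH]
                exact Finset.mem_filter.mpr ⟨h0, Finset.empty_subset H⟩
              have hrkN : 0 < (M.loc H).rk := by
                rw [rk_loc]
                obtain ⟨e, he⟩ := Finset.nonempty_iff_ne_empty.mpr hHe
                have heE : e ∈ M.E := subset_of_mem_flats hH he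
                have h1 : 1 ≤ M.r {e} := one_le_r_singleton hM heE
                  (by rw [hLe]; exact Finset.notMem_empty e)
                have h2 : M.r {e} ≤ M.r H := r_mono hM (Finset.singleton_subset_iff.mpr he)
                omega
              have hkey := key_identity hNM h0N hrkN
              rw [flats_loc hM hH, Finset.sum_filter] at hkey
              have hsummand : ∀ F ∈ M.flats.erase ∅,
                  (if F ⊆ H then Polynomial.reflect ((M.loc H).r F) (((M.loc H).loc F).charPoly)
                    * ((M.loc H).con F).charPoly else 0)
                  = (if F ≠ ∅ ∧ F ⊆ H then
                      (Polynomial.reflect (M.r F) ((M.loc F).charPoly)) *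
                        ((M.loc H).con F).charPoly else 0) := by
                intro F hFe
                obtain ⟨hFne, hFf⟩ := Finset.mem_erase.mp hFe
                by_cases hFH : F ⊆ H
                · rw [if_pos hFH, if_pos ⟨hFne, hFH⟩, loc_r_of_subset hFH, loc_loc hFH]
                · rw [if_neg hFH, if_neg (fun hc => hFH hc.2)]
              have hsplit := Finset.add_sum_erase M.flats
                (fun F => if F ⊆ H then Polynomial.reflect ((M.loc H).r F)
                  (((M.loc H).loc F).charPoly) * ((M.loc H).con F).charPoly else 0) h0
              rw [← hsplit] at hkey
              rw [Finset.sum_congr rfl hsummand] at hkey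
              have hzeroterm :
                  (if (∅ : Finset α) ⊆ H then Polynomial.reflect ((M.loc H).r ∅)
                    (((M.loc H).loc ∅).charPoly) * ((M.loc H).con ∅).charPoly else 0)
                  = (M.loc H).charPoly := by
                rw [if_pos (Finset.empty_subset H), loc_loc (Finset.empty_subset H),
                  con_empty hNM, charPoly_loc_empty hM]
                have hr0 : (M.loc H).r ∅ = 0 := by
                  rw [loc_r]
                  simpa using r_empty hM
                rw [hr0, reflect_one_zero, one_mul]
              rw [hzeroterm] at hkey
              have hS : (∑ F ∈ M.flats.erase ∅, if F ≠ ∅ ∧ F ⊆ H then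
                  (Polynomial.reflect (M.r F) ((M.loc F).charPoly)) *
                    ((M.loc H).con F).charPoly else 0)
                  = ∑ F ∈ M.flats, if F ≠ ∅ ∧ F ⊆ H then
                  (Polynomial.reflect (M.r F) ((M.loc F).charPoly)) *
                    ((M.loc H).con F).charPoly else 0 := by
                apply Finset.sum_erase
                rw [if_neg]
                rintro ⟨h1, -⟩
                exact h1 rfl
              rw [hS] at hkey
              have : (∑ F ∈ M.flats, if F ≠ ∅ ∧ F ⊆ H then
                  (Polynomial.reflect (M.r F) ((M.loc F).charPoly)) *
                    ((M.loc H).con F).charPoly else 0) = -(M.loc H).charPoly := by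
                linear_combination hkey
              rw [this, neg_mul]
          rw [Finset.sum_congr rfl hHterm]
          have hfinal : ∀ H ∈ M.flats,
              (if H = ∅ then (0:Polynomial ℤ) else -((M.loc H).charPoly * KL (M.con H)))
                = -(if H ≠ ∅ then ((M.loc H).charPoly * KL (M.con H)) else 0) := by
            intro H _
            by_cases hHe : H = ∅
            · simp [hHe]
            · simp [hHe]
          rw [Finset.sum_congr rfl hfinal, Finset.sum_neg_distrib]
          exact neg_inj.mpr (Finset.sum_filter _ _).symm
        have hanti : ∀ k, k ≤ M.rk → Q.coeff (M.rk - k) = -Q.coeff k := by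
          intro k hk
          have h1 := congrArg (fun p => Polynomial.coeff p k) hsym
          simp only [Polynomial.coeff_reflect, Polynomial.coeff_neg] at h1
          rwa [Polynomial.revAt_le hk] at h1
        refine ⟨fun h => absurd h hd, fun _ => by rw [hKLM]; exact trunc_natDegree hdpos Q, ?_⟩
        rw [hKLM, trunc_reflect hdpos Q hQdeg hanti, ← hKLM]
        have hins : M.flats = insert ∅ (M.flats.filter (fun F => F ≠ ∅)) := by
          ext F
          simp only [Finset.mem_insert, Finset.mem_filter]
          constructor
          · intro hF
            by_cases hFe : F = ∅
            · exact Or.inl hFe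
            · exact Or.inr ⟨hF, hFe⟩
          · rintro (rfl | ⟨hF, -⟩)
            · exact h0
            · exact hF
        rw [hins, Finset.sum_insert (by simp)]
        rw [con_empty hM, charPoly_loc_empty hM, one_mul, ← hQdef]
end PreMatroid
end Chunk7
section Chunk8
open PreMatroid

theorem KL_unique {P : KLfun} (hP : KLconds P) :
    ∀ (n : ℕ) (β : Type) [inst : DecidableEq β] (M : PreMatroid β) (h : M.IsMatroid),
      M.E.card < n → P β M h = KL M := by
  intro n
  induction n with
  | zero => intro β inst M h hcard; omega
  | succ n ih =>
    intro β inst M h hcard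
    have hPcongr : ∀ (N N' : PreMatroid β) (hN : N.IsMatroid) (hN' : N'.IsMatroid),
        N = N' → P β N hN = P β N' hN' := by
      rintro N N' hN hN' rfl
      rfl
    obtain ⟨c1, c2, c3⟩ := hP β M h
    obtain ⟨s1, s2, s3⟩ := KL_spec (n+1) M hcard h
    by_cases hL : M.loops.Nonempty
    · have hconv : (∑ F ∈ M.flats.attach,
          (M.loc F.1).charPoly * P β (M.con F.1) (h.con (subset_of_mem_flats F.2)))
          = ∑ F ∈ M.flats, (M.loc F).charPoly * KL (M.con F) :=
        calc (∑ F ∈ M.flats.attach,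
            (M.loc F.1).charPoly * P β (M.con F.1) (h.con (subset_of_mem_flats F.2)))
            = ∑ F ∈ M.flats.attach, (M.loc F.1).charPoly * KL (M.con F.1) := by
              apply Finset.sum_congr rfl
              intro F _
              congr 1
              apply ih
              have hne : F.1.Nonempty := by
                obtain ⟨e, he⟩ := hL
                exact ⟨e, loops_subset_flat h F.2 he⟩
              have h2 := Finset.card_lt_card
                (Finset.sdiff_ssubset (subset_of_mem_flats F.2) hne)
              rw [con_E]
              omega
          _ = ∑ F ∈ M.flats, (M.loc F).charPoly * KL (M.con F) :=
              Finset.sum_attach M.flats (fun F => (M.loc F).charPoly * KL (M.con F))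
      have e1 : P β M h = ((P β M h).reflect M.rk).reflect M.rk := (reflect_reflect _ _).symm
      rw [e1, c3, hconv, ← s3, reflect_reflect]
    · have hLe := Finset.not_nonempty_iff_eq_empty.mp hL
      have h0 : ∅ ∈ M.flats := (empty_mem_flats_iff h).mpr hLe
      by_cases hd : M.rk = 0
      · rw [c1 hd, s1 hd]
      · have hdpos : 0 < M.rk := by omega
        have hins : M.flats = insert ∅ (M.flats.filter (fun F => F ≠ ∅)) := by
          ext F
          simp only [Finset.mem_insert, Finset.mem_filter]
          constructor
          · intro hF
            by_cases hFe : F = ∅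
            · exact Or.inl hFe
            · exact Or.inr ⟨hF, hFe⟩
          · rintro (rfl | ⟨hF, -⟩)
            · exact h0
            · exact hF
        have hE2 : (KL M).reflect M.rk
            = KL M + ∑ F ∈ M.flats.filter (fun F => F ≠ ∅), (M.loc F).charPoly * KL (M.con F) := by
          rw [s3]
          nth_rewrite 1 [hins]
          rw [Finset.sum_insert (by simp), con_empty h, charPoly_loc_empty h, one_mul]
        have hconv : (∑ F ∈ M.flats.attach,
            (M.loc F.1).charPoly * P β (M.con F.1) (h.con (subset_of_mem_flats F.2)))
            = ∑ F ∈ M.flats, (M.loc F).charPoly * (if F = ∅ then P β M h else KL (M.con F)) :=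
          calc (∑ F ∈ M.flats.attach,
              (M.loc F.1).charPoly * P β (M.con F.1) (h.con (subset_of_mem_flats F.2)))
              = ∑ F ∈ M.flats.attach,
                  (M.loc F.1).charPoly * (if F.1 = ∅ then P β M h else KL (M.con F.1)) := by
                apply Finset.sum_congr rfl
                intro F _
                congr 1
                by_cases hFe : F.1 = ∅
                · rw [if_pos hFe]
                  exact hPcongr _ _ _ _ (by rw [hFe]; exact con_empty h)
                · rw [if_neg hFe]
                  apply ih
                  have h2 := Finset.card_lt_card
                    (Finset.sdiff_ssubset (subset_of_mem_flats F.2)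
                      (Finset.nonempty_iff_ne_empty.mpr hFe))
                  rw [con_E]
                  omega
            _ = ∑ F ∈ M.flats, (M.loc F).charPoly * (if F = ∅ then P β M h else KL (M.con F)) :=
                Finset.sum_attach M.flats
                  (fun F => (M.loc F).charPoly * (if F = ∅ then P β M h else KL (M.con F)))
        have hE1 : (P β M h).reflect M.rk
            = P β M h + ∑ F ∈ M.flats.filter (fun F => F ≠ ∅), (M.loc F).charPoly * KL (M.con F) := by
          rw [c3, hconv]
          nth_rewrite 1 [hins]
          rw [Finset.sum_insert (by simp), if_pos rfl, charPoly_loc_empty h, one_mul]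
          congr 1
          apply Finset.sum_congr rfl
          intro F hF
          rw [if_neg (Finset.mem_filter.mp hF).2]
        have hPd := c2 hdpos
        have hKd := s2 hdpos
        apply Polynomial.ext
        intro k
        by_cases h2k : 2*k < M.rk
        · have g1 := congrArg (fun p => Polynomial.coeff p (M.rk - k)) hE1
          have g2 := congrArg (fun p => Polynomial.coeff p (M.rk - k)) hE2
          simp only [Polynomial.coeff_reflect, Polynomial.coeff_add] at g1 g2
          rw [Polynomial.revAt_le (Nat.sub_le _ _),
            show M.rk - (M.rk - k) = k by omega] at g1 g2
          have z1 : (P β M h).coeff (M.rk - k) = 0 :=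
            Polynomial.coeff_eq_zero_of_natDegree_lt (by omega)
          have z2 : (KL M).coeff (M.rk - k) = 0 :=
            Polynomial.coeff_eq_zero_of_natDegree_lt (by omega)
          rw [z1, zero_add] at g1
          rw [z2, zero_add] at g2
          rw [g1, g2]
        · rw [Polynomial.coeff_eq_zero_of_natDegree_lt (by omega),
            Polynomial.coeff_eq_zero_of_natDegree_lt (by omega)]

/-- There is a unique way to assign to each matroid `M` a polynomial
`P_M(t) ∈ ℤ[t]` such that: (1) `P_M = 1` if `rk M = 0`; (2) `deg P_M < (rk M)/2` if
`rk M > 0`; (3) `t^{rk M} P_M(1/t) = ∑_F χ_{M_F}(t) P_{M^F}(t)`, the sum over all flats. -/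
theorem kl_exists_unique : ∃! P : KLfun, KLconds P := by
  refine ⟨(fun β _ M h => KL M), ?_, ?_⟩
  · intro β _ M h
    obtain ⟨s1, s2, s3⟩ := KL_spec (M.E.card + 1) M (Nat.lt_succ_self _) h
    refine ⟨s1, s2, ?_⟩
    show (KL M).reflect M.rk = ∑ F ∈ M.flats.attach, (M.loc F.1).charPoly * KL (M.con F.1)
    rw [Finset.sum_attach M.flats (fun F => (M.loc F).charPoly * KL (M.con F))]
    exact s3
  · intro P' hP'
    funext β inst M h
    exact KL_unique hP' (M.E.card + 1) β M h (Nat.lt_succ_self _)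
end Chunk8
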